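/- arXiv:1608.02412 — 2 statements merged into one kernel-verified Lean document; each statement's English description precedes it below -/
import Mathlib

section
/- Let l < r be real numbers and let f : ℝ → ℝ be continuously differentiable on [l, r] with f(l) = 0 and f(r) = 0. Then for every s ∈ [l, r] one has f(s)² ≤ 2 · ‖f‖_{L²(l,r)} · ‖f′‖_{L²(l,r)}; in particular the supremum of |f| over [l, r] is at most √2 · ‖f‖_{L²(l,r)}^{1/2} · ‖f′‖_{L²(l,r)}^{1/2} (the one-dimensional Agmon inequality). -/
open MeasureTheory Set

lemma agmon_aux (A B c : ℝ) (hA : 0 ≤ A) (hB : 0 ≤ B)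
    (h : ∀ t > 0, c ≤ t * A + B / t) : c ≤ 2 * Real.sqrt A * Real.sqrt B := by
  rcases eq_or_lt_of_le hA with hA0 | hA0
  · have hc : c ≤ 0 := by
      by_contra hc
      push_neg at hc
      rcases eq_or_lt_of_le hB with hB0 | hB0
      · have := h 1 one_pos
        rw [← hA0, ← hB0] at this
        norm_num at this
        linarith
      · have ht : (0:ℝ) < 2 * B / c := by positivity
        have h1 := h (2 * B / c) ht
        rw [← hA0] at h1
        have h2 : B / (2 * B / c) = c / 2 := by field_simp
        rw [h2] at h1
        linarith
    have : 0 ≤ 2 * Real.sqrt A * Real.sqrt B := by positivity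
    linarith
  · rcases eq_or_lt_of_le hB with hB0 | hB0
    · have hc : c ≤ 0 := by
        by_contra hc
        push_neg at hc
        have ht : (0:ℝ) < c / (2 * A) := by positivity
        have := h (c / (2 * A)) ht
        rw [← hB0] at this
        have h1 : c / (2 * A) * A = c / 2 := by field_simp
        rw [h1] at this
        simp at this
        linarith
      have : 0 ≤ 2 * Real.sqrt A * Real.sqrt B := by positivity
      linarith
    · set a := Real.sqrt A with ha
      set b := Real.sqrt B with hb
      have ha2 : a ^ 2 = A := Real.sq_sqrt hA
      have hb2 : b ^ 2 = B := Real.sq_sqrt hB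
      have hap : 0 < a := Real.sqrt_pos.mpr hA0
      have hbp : 0 < b := Real.sqrt_pos.mpr hB0
      have := h (b / a) (by positivity)
      have heq : b / a * A + B / (b / a) = 2 * a * b := by
        rw [← ha2, ← hb2]
        field_simp
        ring
      linarith [heq ▸ this]

/-- One-dimensional Agmon inequality: if `f` is continuously differentiable on `[l, r]`
with `f l = 0` and `f r = 0`, then `f s ^ 2 ≤ 2 ‖f‖_{L²} ‖f'‖_{L²}` for every
`s ∈ [l, r]`, and consequently the supremum of `|f|` over `[l, r]` is at most
`√2 ‖f‖_{L²}^{1/2} ‖f'‖_{L²}^{1/2}`. -/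
theorem agmon_one_dim (l r : ℝ) (hlr : l < r) (f f' : ℝ → ℝ)
    (hderiv : ∀ x ∈ Set.Icc l r, HasDerivAt f (f' x) x)
    (hcont : ContinuousOn f' (Set.Icc l r))
    (hfl : f l = 0) (hfr : f r = 0) :
    (∀ s ∈ Set.Icc l r,
      (f s) ^ 2 ≤ 2 * Real.sqrt (∫ x in l..r, (f x) ^ 2)
          * Real.sqrt (∫ x in l..r, (f' x) ^ 2)) ∧
    sSup ((fun s => |f s|) '' Set.Icc l r)
      ≤ Real.sqrt 2 * Real.sqrt (Real.sqrt (∫ x in l..r, (f x) ^ 2))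
          * Real.sqrt (Real.sqrt (∫ x in l..r, (f' x) ^ 2)) := by
  set A := ∫ x in l..r, (f x) ^ 2 with hAdef
  set B := ∫ x in l..r, (f' x) ^ 2 with hBdef
  have hfc : ContinuousOn f (Set.Icc l r) := fun x hx =>
    (hderiv x hx).continuousAt.continuousWithinAt
  have hA : 0 ≤ A :=
    intervalIntegral.integral_nonneg hlr.le (fun x _ => sq_nonneg _)
  have hB : 0 ≤ B :=
    intervalIntegral.integral_nonneg hlr.le (fun x _ => sq_nonneg _)
  -- continuity of auxiliary integrands
  have hprod : ContinuousOn (fun x => |2 * f x * f' x|) (Set.Icc l r) :=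
    ((continuousOn_const.mul hfc).mul hcont).abs
  -- main pointwise bound
  have main : ∀ s ∈ Set.Icc l r, (f s) ^ 2 ≤ 2 * Real.sqrt A * Real.sqrt B := by
    intro s hs
    obtain ⟨hls, hsr⟩ := hs
    -- FTC on [l, s]
    have hsub : Set.Icc l s ⊆ Set.Icc l r := Set.Icc_subset_Icc le_rfl hsr
    have hftc : (∫ x in l..s, 2 * f x * f' x) = f s ^ 2 - f l ^ 2 := by
      apply intervalIntegral.integral_eq_sub_of_hasDerivAt
      · intro x hx
        rw [Set.uIcc_of_le hls] at hx
        have := (hderiv x (hsub hx)).fun_pow 2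
        simpa [mul_comm, mul_assoc, mul_left_comm] using this
      · apply ContinuousOn.intervalIntegrable
        rw [Set.uIcc_of_le hls]
        exact (continuousOn_const.mul (hfc.mono hsub)).mul (hcont.mono hsub)
    have h1 : (f s) ^ 2 ≤ ∫ x in l..s, |2 * f x * f' x| :=
      calc (f s) ^ 2 = |∫ x in l..s, 2 * f x * f' x| := by
            rw [hftc, hfl]; rw [abs_of_nonneg] <;> nlinarith [sq_nonneg (f s)]
        _ ≤ _ := intervalIntegral.abs_integral_le_integral_abs hls
    have h2 : (∫ x in l..s, |2 * f x * f' x|) ≤ ∫ x in l..r, |2 * f x * f' x| := by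
      apply intervalIntegral.integral_mono_interval le_rfl hls hsr
      · filter_upwards with x using abs_nonneg _
      · apply ContinuousOn.intervalIntegrable
        rwa [Set.uIcc_of_le hlr.le]
    -- AM-GM bound for each t > 0
    have h3 : ∀ t > 0, (∫ x in l..r, |2 * f x * f' x|) ≤ t * A + B / t := by
      intro t ht
      have hint : (∫ x in l..r, |2 * f x * f' x|)
          ≤ ∫ x in l..r, (t * (f x) ^ 2 + (f' x) ^ 2 / t) := by
        apply intervalIntegral.integral_mono_on hlr.le
        · apply ContinuousOn.intervalIntegrable
          rwa [Set.uIcc_of_le hlr.le]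
        · apply ContinuousOn.intervalIntegrable
          rw [Set.uIcc_of_le hlr.le]
          exact (continuousOn_const.mul (hfc.pow 2)).add ((hcont.pow 2).div_const t)
        · intro x hx
          have habs : |2 * f x * f' x| = 2 * |f x| * |f' x| := by
            rw [abs_mul, abs_mul]; norm_num
          rw [habs, ← sq_abs (f x), ← sq_abs (f' x)]
          set u := |f x|
          set v := |f' x|
          have hgoal : 2 * u * v * t ≤ (t * u ^ 2 + v ^ 2 / t) * t := by
            field_simp
            nlinarith [sq_nonneg (t * u - v)]
          exact le_of_mul_le_mul_right hgoal ht
      have hsplit : (∫ x in l..r, (t * (f x) ^ 2 + (f' x) ^ 2 / t)) = t * A + B / t := by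
        rw [intervalIntegral.integral_add, intervalIntegral.integral_const_mul,
          intervalIntegral.integral_div]
        · apply ContinuousOn.intervalIntegrable
          rw [Set.uIcc_of_le hlr.le]
          exact continuousOn_const.mul (hfc.pow 2)
        · apply ContinuousOn.intervalIntegrable
          rw [Set.uIcc_of_le hlr.le]
          exact (hcont.pow 2).div_const t
      linarith [hint, hsplit ▸ hint]
    exact le_trans (le_trans h1 h2) (agmon_aux A B _ hA hB h3)
  refine ⟨main, ?_⟩
  apply Real.sSup_le
  · rintro y ⟨s, hs, rfl⟩
    have h := main s hs
    show |f s| ≤ _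
    rw [show |f s| = Real.sqrt ((f s) ^ 2) from (Real.sqrt_sq_eq_abs _).symm]
    calc Real.sqrt ((f s) ^ 2) ≤ Real.sqrt (2 * Real.sqrt A * Real.sqrt B) :=
          Real.sqrt_le_sqrt h
      _ = Real.sqrt 2 * Real.sqrt (Real.sqrt A) * Real.sqrt (Real.sqrt B) := by
          rw [Real.sqrt_mul (by positivity), Real.sqrt_mul (by norm_num)]
  · positivity
end

section
/- Let l < r be real numbers, let a : ℝ → ℝ be integrable on [l, r], and let z, w : ℝ → ℝ be continuously differentiable on [l, r] with z(l) = z(r) = 0 and w(l) = w(r) = 0. Then |∫_l^r a(x) z(x) w(x) dx| ≤ 2 · ‖a‖_{L¹(l,r)} · ‖z‖_{L²(l,r)}^{1/2} · ‖z′‖_{L²(l,r)}^{1/2} · ‖w‖_{L²(l,r)}^{1/2} · ‖w′‖_{L²(l,r)}^{1/2}. -/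
open MeasureTheory Set

/-- Cauchy–Schwarz for interval integrals of continuous functions. -/
lemma cs_interval (l r : ℝ) (hlr : l ≤ r) (f g : ℝ → ℝ)
    (hf : ContinuousOn f (Set.Icc l r)) (hg : ContinuousOn g (Set.Icc l r)) :
    |∫ x in l..r, f x * g x|
      ≤ Real.sqrt (∫ x in l..r, (f x) ^ 2) * Real.sqrt (∫ x in l..r, (g x) ^ 2) := by
  have huIcc : Set.uIcc l r = Set.Icc l r := Set.uIcc_of_le hlr
  have hfI : IntervalIntegrable f volume l r := (huIcc ▸ hf).intervalIntegrable
  have hgI : IntervalIntegrable g volume l r := (huIcc ▸ hg).intervalIntegrable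
  have hf2 : IntervalIntegrable (fun x => f x ^ 2) volume l r :=
    ((huIcc ▸ hf).pow 2).intervalIntegrable
  have hg2 : IntervalIntegrable (fun x => g x ^ 2) volume l r :=
    ((huIcc ▸ hg).pow 2).intervalIntegrable
  have hfg : IntervalIntegrable (fun x => f x * g x) volume l r :=
    ((huIcc ▸ hf).mul (huIcc ▸ hg)).intervalIntegrable
  set A := ∫ x in l..r, (f x) ^ 2 with hA
  set B := ∫ x in l..r, (g x) ^ 2 with hB
  set C := ∫ x in l..r, f x * g x with hC
  have hA0 : 0 ≤ A := by
    apply intervalIntegral.integral_nonneg hlr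
    intro x _; positivity
  have hB0 : 0 ≤ B := by
    apply intervalIntegral.integral_nonneg hlr
    intro x _; positivity
  have key : ∀ t : ℝ, 0 ≤ B * t ^ 2 + (2 * C) * t + A := by
    intro t
    have : B * t ^ 2 + (2 * C) * t + A = ∫ x in l..r, (f x + t * g x) ^ 2 := by
      have : ∀ x, (f x + t * g x) ^ 2
          = t ^ 2 * g x ^ 2 + (2 * t) * (f x * g x) + f x ^ 2 := by intro x; ring
      rw [intervalIntegral.integral_congr (g := fun x =>
        t ^ 2 * g x ^ 2 + (2 * t) * (f x * g x) + f x ^ 2) (fun x _ => this x)]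
      rw [intervalIntegral.integral_add ((hg2.const_mul _).add (hfg.const_mul _)) hf2,
        intervalIntegral.integral_add (hg2.const_mul _) (hfg.const_mul _),
        intervalIntegral.integral_const_mul, intervalIntegral.integral_const_mul]
      ring
    rw [this]
    apply intervalIntegral.integral_nonneg hlr
    intro x _; positivity
  have hdisc : discrim B (2 * C) A ≤ 0 := by
    rcases eq_or_lt_of_le hB0 with hB | hB
    · have hC0 : C = 0 := by
        by_contra hC0
        rcases lt_or_gt_of_ne hC0 with h | h
        · have := key ((-A - 1) / (2 * C))
          rw [← hB] at this
          have h2C : 2 * C < 0 := by linarith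
          have : 0 ≤ 2 * C * ((-A - 1) / (2 * C)) + A := by linarith [this]
          rw [mul_div_cancel₀ _ (by linarith : (2:ℝ) * C ≠ 0)] at this
          linarith
        · have := key ((-A - 1) / (2 * C))
          rw [← hB] at this
          have : 0 ≤ 2 * C * ((-A - 1) / (2 * C)) + A := by linarith [this]
          rw [mul_div_cancel₀ _ (by positivity : (2:ℝ) * C ≠ 0)] at this
          linarith
      simp [discrim, hC0, ← hB]
    · exact discrim_le_zero (fun t => by linarith [key t])
  have hsq : C ^ 2 ≤ A * B := by
    unfold discrim at hdisc; nlinarith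
  calc |C| = Real.sqrt (C ^ 2) := (Real.sqrt_sq_eq_abs C).symm
    _ ≤ Real.sqrt (A * B) := Real.sqrt_le_sqrt hsq
    _ = Real.sqrt A * Real.sqrt B := Real.sqrt_mul hA0 _

/-- Agmon-type sup bound on `[l,r]` for a function vanishing at `l`. -/
lemma agmon_bound (l r : ℝ) (hlr : l ≤ r) (z z' : ℝ → ℝ)
    (hz : ∀ x ∈ Set.Icc l r, HasDerivAt z (z' x) x)
    (hz' : ContinuousOn z' (Set.Icc l r)) (hzl : z l = 0)
    {x : ℝ} (hx : x ∈ Set.Icc l r) :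
    |z x| ≤ Real.sqrt 2 * Real.sqrt (Real.sqrt (∫ t in l..r, (z t) ^ 2))
        * Real.sqrt (Real.sqrt (∫ t in l..r, (z' t) ^ 2)) := by
  have huIcc : Set.uIcc l r = Set.Icc l r := Set.uIcc_of_le hlr
  have hzc : ContinuousOn z (Set.Icc l r) := fun t ht => (hz t ht).continuousAt.continuousWithinAt
  set A := ∫ t in l..r, (z t) ^ 2 with hA
  set A' := ∫ t in l..r, (z' t) ^ 2 with hA'
  have hA0 : 0 ≤ A := intervalIntegral.integral_nonneg hlr (fun t _ => by positivity)
  have hA'0 : 0 ≤ A' := intervalIntegral.integral_nonneg hlr (fun t _ => by positivity)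
  -- FTC: z x ^ 2 = ∫_l^x 2 z z'
  have hIcc_sub : Set.Icc l x ⊆ Set.Icc l r := Set.Icc_subset_Icc le_rfl hx.2
  have hzz'c : ContinuousOn (fun t => 2 * z t * z' t) (Set.Icc l r) :=
    ((continuousOn_const.mul hzc).mul hz')
  have hftc : z x ^ 2 = ∫ t in l..x, 2 * z t * z' t := by
    have := intervalIntegral.integral_eq_sub_of_hasDerivAt
      (f := fun t => z t ^ 2) (f' := fun t => 2 * z t * z' t)
      (a := l) (b := x)
      (fun t ht => by
        have ht' : t ∈ Set.Icc l r := hIcc_sub (by rwa [Set.uIcc_of_le hx.1] at ht)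
        have := (hz t ht').fun_pow 2
        simpa [mul_comm, mul_assoc, mul_left_comm] using this)
      (((hzz'c.mono (by rw [Set.uIcc_of_le hx.1]; exact hIcc_sub))).intervalIntegrable)
    rw [this, hzl]; ring
  have habs : z x ^ 2 ≤ ∫ t in l..r, |2 * z t * z' t| := by
    rw [hftc]
    calc (∫ t in l..x, 2 * z t * z' t) ≤ ∫ t in l..x, |2 * z t * z' t| := by
          apply intervalIntegral.integral_mono_on hx.1
          · exact ((hzz'c.mono (by rw [Set.uIcc_of_le hx.1]; exact hIcc_sub))).intervalIntegrable
          · exact (((hzz'c.abs).mono (by rw [Set.uIcc_of_le hx.1]; exact hIcc_sub))).intervalIntegrable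
          · exact fun t _ => le_abs_self _
      _ ≤ ∫ t in l..r, |2 * z t * z' t| := by
          apply intervalIntegral.integral_mono_interval le_rfl hx.1 hx.2
          · filter_upwards with t using abs_nonneg _
          · exact ((huIcc ▸ hzz'c.abs)).intervalIntegrable
  have hCS : (∫ t in l..r, |z t| * |z' t|) ≤ Real.sqrt A * Real.sqrt A' := by
    have := cs_interval l r hlr (fun t => |z t|) (fun t => |z' t|) hzc.abs hz'.abs
    simp only [sq_abs] at this
    exact (le_abs_self _).trans this
  have heq : (∫ t in l..r, |2 * z t * z' t|) = 2 * ∫ t in l..r, |z t| * |z' t| := by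
    rw [← intervalIntegral.integral_const_mul]
    apply intervalIntegral.integral_congr
    intro t _
    simp only [abs_mul, abs_two]
    ring
  have hbound : z x ^ 2 ≤ 2 * (Real.sqrt A * Real.sqrt A') := by
    rw [heq] at habs; linarith
  calc |z x| = Real.sqrt (z x ^ 2) := (Real.sqrt_sq_eq_abs _).symm
    _ ≤ Real.sqrt (2 * (Real.sqrt A * Real.sqrt A')) := Real.sqrt_le_sqrt hbound
    _ = Real.sqrt 2 * Real.sqrt (Real.sqrt A) * Real.sqrt (Real.sqrt A') := by
        rw [Real.sqrt_mul (by norm_num), Real.sqrt_mul (Real.sqrt_nonneg _), mul_assoc]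

/-- Estimate for the reaction term in dimension one. -/
theorem reaction_term_estimate_one_dim (l r : ℝ) (hlr : l < r)
    (a z z' w w' : ℝ → ℝ)
    (ha : IntervalIntegrable a MeasureTheory.volume l r)
    (hz : ∀ x ∈ Set.Icc l r, HasDerivAt z (z' x) x)
    (hz' : ContinuousOn z' (Set.Icc l r))
    (hzl : z l = 0) (hzr : z r = 0)
    (hw : ∀ x ∈ Set.Icc l r, HasDerivAt w (w' x) x)
    (hw' : ContinuousOn w' (Set.Icc l r))
    (hwl : w l = 0) (hwr : w r = 0) :
    |∫ x in l..r, a x * z x * w x|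
      ≤ 2 * (∫ x in l..r, |a x|)
          * Real.sqrt (Real.sqrt (∫ x in l..r, (z x) ^ 2))
          * Real.sqrt (Real.sqrt (∫ x in l..r, (z' x) ^ 2))
          * Real.sqrt (Real.sqrt (∫ x in l..r, (w x) ^ 2))
          * Real.sqrt (Real.sqrt (∫ x in l..r, (w' x) ^ 2)) := by
  have hlr' : l ≤ r := hlr.le
  have huIcc : Set.uIcc l r = Set.Icc l r := Set.uIcc_of_le hlr'
  have hzc : ContinuousOn z (Set.Icc l r) := fun t ht => (hz t ht).continuousAt.continuousWithinAt
  have hwc : ContinuousOn w (Set.Icc l r) := fun t ht => (hw t ht).continuousAt.continuousWithinAt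
  set Mz := Real.sqrt 2 * Real.sqrt (Real.sqrt (∫ x in l..r, (z x) ^ 2))
      * Real.sqrt (Real.sqrt (∫ x in l..r, (z' x) ^ 2)) with hMz
  set Mw := Real.sqrt 2 * Real.sqrt (Real.sqrt (∫ x in l..r, (w x) ^ 2))
      * Real.sqrt (Real.sqrt (∫ x in l..r, (w' x) ^ 2)) with hMw
  have hMz0 : 0 ≤ Mz := by positivity
  have hMw0 : 0 ≤ Mw := by positivity
  have hzb : ∀ x ∈ Set.Icc l r, |z x| ≤ Mz := fun x hx => agmon_bound l r hlr' z z' hz hz' hzl hx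
  have hwb : ∀ x ∈ Set.Icc l r, |w x| ≤ Mw := fun x hx => agmon_bound l r hlr' w w' hw hw' hwl hx
  have hazw : IntervalIntegrable (fun x => a x * z x * w x) volume l r :=
    (ha.mul_continuousOn (huIcc ▸ hzc)).mul_continuousOn (huIcc ▸ hwc)
  have step1 : |∫ x in l..r, a x * z x * w x| ≤ ∫ x in l..r, |a x * z x * w x| :=
    intervalIntegral.abs_integral_le_integral_abs hlr'
  have step2 : (∫ x in l..r, |a x * z x * w x|) ≤ ∫ x in l..r, |a x| * (Mz * Mw) := by
    apply intervalIntegral.integral_mono_on hlr' hazw.abs (ha.abs.mul_const _)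
    intro x hx
    rw [abs_mul, abs_mul]
    calc |a x| * |z x| * |w x| ≤ |a x| * Mz * Mw := by
          apply mul_le_mul (mul_le_mul le_rfl (hzb x hx) (abs_nonneg _) (abs_nonneg _))
            (hwb x hx) (abs_nonneg _) (by positivity)
      _ = |a x| * (Mz * Mw) := by ring
  have step3 : (∫ x in l..r, |a x| * (Mz * Mw)) = (∫ x in l..r, |a x|) * (Mz * Mw) :=
    intervalIntegral.integral_mul_const _ _
  have h2 : Real.sqrt 2 * Real.sqrt 2 = 2 := Real.mul_self_sqrt (by norm_num)
  calc |∫ x in l..r, a x * z x * w x| ≤ (∫ x in l..r, |a x|) * (Mz * Mw) := by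
        rw [← step3]; exact step1.trans step2
    _ = _ := by
        rw [hMz, hMw]
        linear_combination ((∫ x in l..r, |a x|)
          * Real.sqrt (Real.sqrt (∫ x in l..r, (z x) ^ 2))
          * Real.sqrt (Real.sqrt (∫ x in l..r, (z' x) ^ 2))
          * Real.sqrt (Real.sqrt (∫ x in l..r, (w x) ^ 2))
          * Real.sqrt (Real.sqrt (∫ x in l..r, (w' x) ^ 2))) * h2
end
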